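/- Fix β ∈ ℕ with β ≥ 1 and θ > 0, and consider the generalized normal density on ℝ, q_θ(x) = (β θ^{1/(2β)}/Γ(1/(2β))) exp(−θ x^{2β}). Then the function Φ_θ(x) := −x²/(4βθ) + Γ(3/(2β)) / (4β θ^{1+1/β} Γ(1/(2β))) satisfies: (i) A_θ(Φ_θ′)(x) = −∂_θ log q_θ(x) = x^{2β} − 1/(2βθ) for all x ∈ ℝ; and (ii) E_θ[Φ_θ] = 0, using the second moment E_θ[X²] = θ^{−1/β} Γ(3/(2β))/Γ(1/(2β)). Hence Φ_θ is the Wasserstein score function of the scale parameter θ. -/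

import Mathlib

open MeasureTheory Real

/-- One-dimensional divergence-based Stein operator `A_q f = (q f)′ / q`. -/
noncomputable def stein1 (q f : ℝ → ℝ) (x : ℝ) : ℝ :=
  deriv (fun y => q y * f y) x / q x

/-- Generalized normal density `q_θ(x) = β θ^{1/(2β)}/Γ(1/(2β)) · exp(−θ x^{2β})`. -/
noncomputable def gnDens (β : ℕ) (θ x : ℝ) : ℝ :=
  (β : ℝ) * θ ^ (1 / (2 * (β : ℝ))) / Real.Gamma (1 / (2 * (β : ℝ)))
    * Real.exp (-θ * x ^ (2 * β))

section Aux

open Set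

/-- An everywhere function of `|x|` integrable on the half line is integrable on `ℝ`. -/
lemma aux_integrable_comp_abs {G : ℝ → ℝ} (hf : IntegrableOn G (Ioi 0)) :
    Integrable (fun x => G |x|) := by
  have int_Ioi : IntegrableOn (fun x => G |x|) (Ioi 0) :=
    hf.congr_fun (fun x hx => by rw [abs_of_pos hx]) measurableSet_Ioi
  have int_Iic : IntegrableOn (fun x ↦ G |x|) (Iic 0) := by
    rw [← Measure.map_neg_eq_self (volume : Measure ℝ)]
    have m : MeasurableEmbedding fun x : ℝ => -x := (Homeomorph.neg ℝ).measurableEmbedding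
    rw [m.integrableOn_map_iff]
    simp_rw [Function.comp_def, abs_neg, neg_preimage, neg_Iic, neg_zero]
    exact Iff.mpr integrableOn_Ici_iff_integrableOn_Ioi int_Ioi
  have := int_Iic.union int_Ioi
  rwa [Iic_union_Ioi, integrableOn_univ] at this

lemma aux_halfline (β : ℕ) (hβ : 1 ≤ β) (θ : ℝ) (hθ : 0 < θ) (k : ℕ) :
    ∫ x in Ioi (0:ℝ), Real.exp (-θ * x ^ (2 * β)) * x ^ k
      = θ ^ (-((k:ℝ)+1) / (2*(β:ℝ))) * (1 / (2*(β:ℝ))) * Real.Gamma (((k:ℝ)+1) / (2*(β:ℝ))) := by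
  have hb : (0:ℝ) < β := by exact_mod_cast hβ
  have h := integral_rpow_mul_exp_neg_mul_rpow (p := 2*(β:ℝ)) (q := (k:ℝ)) (b := θ)
    (by positivity) (lt_of_lt_of_le neg_one_lt_zero (Nat.cast_nonneg k)) hθ
  rw [← h]
  refine setIntegral_congr_fun measurableSet_Ioi (fun x hx => ?_)
  have hx : (0:ℝ) < x := hx
  rw [← Real.rpow_natCast x k, ← Real.rpow_natCast x (2*β)]
  push_cast
  ring_nf

lemma aux_intOn (β : ℕ) (hβ : 1 ≤ β) (θ : ℝ) (hθ : 0 < θ) (k : ℕ) (C : ℝ) :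
    IntegrableOn (fun x : ℝ => C * Real.exp (-θ * x ^ (2 * β)) * x ^ k) (Ioi 0) := by
  have hb : (0:ℝ) < β := by exact_mod_cast hβ
  have hb1 : (1:ℝ) ≤ β := by exact_mod_cast hβ
  have h0 := integrableOn_rpow_mul_exp_neg_mul_rpow (s := (k:ℝ)) (p := 2*(β:ℝ)) (b := θ)
    (lt_of_lt_of_le neg_one_lt_zero (Nat.cast_nonneg k)) (by linarith) hθ
  have h1 : IntegrableOn
      (fun x : ℝ => C * (x ^ (k:ℝ) * Real.exp (-θ * x ^ (2*(β:ℝ))))) (Ioi 0) :=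
    h0.const_mul C
  refine h1.congr_fun (fun x hx => ?_) measurableSet_Ioi
  have hx : (0:ℝ) < x := hx
  rw [← Real.rpow_natCast x k, ← Real.rpow_natCast x (2*β)]
  push_cast
  ring_nf

end Aux

/-- for the generalized normal distribution, the function
`Φ_θ(x) = −x²/(4βθ) + Γ(3/(2β))/(4β θ^{1+1/β} Γ(1/(2β)))` satisfies
(i) `A_θ(Φ_θ′)(x) = −∂_θ log q_θ(x) = x^{2β} − 1/(2βθ)` for all x, and
(ii) `E_θ[Φ_θ] = 0`, using `E_θ[X²] = θ^{−1/β} Γ(3/(2β))/Γ(1/(2β))`;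
i.e. it is the Wasserstein score function of the scale parameter. -/
theorem stmt15 (β : ℕ) (hβ : 1 ≤ β) (θ : ℝ) (hθ : 0 < θ) :
    (∀ x : ℝ,
        (stein1 (gnDens β θ)
            (deriv (fun y => -y ^ 2 / (4 * (β : ℝ) * θ)
              + Real.Gamma (3 / (2 * (β : ℝ)))
                / (4 * (β : ℝ) * θ ^ (1 + 1 / (β : ℝ)) * Real.Gamma (1 / (2 * (β : ℝ)))))) x
          = - deriv (fun t => Real.log (gnDens β t x)) θ)
        ∧ - deriv (fun t => Real.log (gnDens β t x)) θ
            = x ^ (2 * β) - 1 / (2 * (β : ℝ) * θ))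
    ∧ (∫ x : ℝ, gnDens β θ x * x ^ 2)
        = θ ^ (-(1 : ℝ) / (β : ℝ)) * Real.Gamma (3 / (2 * (β : ℝ)))
            / Real.Gamma (1 / (2 * (β : ℝ)))
    ∧ ∫ x : ℝ, gnDens β θ x * (-x ^ 2 / (4 * (β : ℝ) * θ)
        + Real.Gamma (3 / (2 * (β : ℝ)))
          / (4 * (β : ℝ) * θ ^ (1 + 1 / (β : ℝ)) * Real.Gamma (1 / (2 * (β : ℝ))))) = 0 := by
  have hb : (0:ℝ) < β := by exact_mod_cast hβ
  have hΓ : 0 < Real.Gamma (1 / (2 * (β : ℝ))) := Real.Gamma_pos_of_pos (by positivity)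
  have hΓ3 : 0 < Real.Gamma (3 / (2 * (β : ℝ))) := Real.Gamma_pos_of_pos (by positivity)
  set Γ₁ : ℝ := Real.Gamma (1 / (2 * (β : ℝ))) with hΓ₁def
  set Γ₃ : ℝ := Real.Gamma (3 / (2 * (β : ℝ))) with hΓ₃def
  set C : ℝ := (β : ℝ) * θ ^ (1 / (2 * (β : ℝ))) / Γ₁ with hC
  have hCpos : 0 < C := div_pos (by positivity) hΓ
  have hE : ∀ y : ℝ, gnDens β θ y = C * Real.exp (-θ * y ^ (2 * β)) := fun y => rfl
  set K : ℝ := Γ₃ / (4 * (β : ℝ) * θ ^ (1 + 1 / (β : ℝ)) * Γ₁) with hK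
  -- second component of part 1
  have hlog : ∀ x : ℝ, - deriv (fun t => Real.log (gnDens β t x)) θ
      = x ^ (2 * β) - 1 / (2 * (β : ℝ) * θ) := by
    intro x
    have heq : (fun t => Real.log (gnDens β t x)) =ᶠ[nhds θ]
        (fun t => Real.log (β : ℝ) + 1 / (2 * (β : ℝ)) * Real.log t
          - Real.log Γ₁ - t * x ^ (2 * β)) := by
      filter_upwards [isOpen_Ioi.mem_nhds (show θ ∈ Set.Ioi 0 from hθ)] with t ht
      have ht : (0:ℝ) < t := ht
      unfold gnDens
      rw [Real.log_mul (by positivity) (Real.exp_ne_zero _), Real.log_exp,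
        Real.log_div (by positivity) (ne_of_gt hΓ),
        Real.log_mul (by positivity) (by positivity),
        Real.log_rpow ht]
      ring
    rw [heq.deriv_eq]
    have hd : HasDerivAt (fun t : ℝ => Real.log (β : ℝ) + 1 / (2 * (β : ℝ)) * Real.log t
        - Real.log Γ₁ - t * x ^ (2 * β))
        (1 / (2 * (β : ℝ)) * θ⁻¹ - 1 * x ^ (2 * β)) θ :=
      ((((Real.hasDerivAt_log hθ.ne').const_mul _).const_add _).sub_const _).sub
        ((hasDerivAt_id θ).mul_const _)
    rw [hd.deriv]
    field_simp
    ring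
  -- first component of part 1
  have hstein : ∀ x : ℝ, (stein1 (gnDens β θ)
      (deriv (fun y => -y ^ 2 / (4 * (β : ℝ) * θ) + K))) x
      = x ^ (2 * β) - 1 / (2 * (β : ℝ) * θ) := by
    intro x
    have hf : (deriv (fun y : ℝ => -y ^ 2 / (4 * (β : ℝ) * θ) + K))
        = fun y => -(2 * y) / (4 * (β : ℝ) * θ) := by
      funext y
      have : HasDerivAt (fun y : ℝ => -y ^ 2 / (4 * (β : ℝ) * θ) + K)
          (-(2 * y ^ 1) / (4 * (β : ℝ) * θ)) y :=
        (((hasDerivAt_pow 2 y).neg).div_const _).add_const K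
      simpa using this.deriv
    rw [hf]
    set E : ℝ := Real.exp (-θ * x ^ (2 * β)) with hEx
    have h1 : HasDerivAt (fun y : ℝ => C * Real.exp (-θ * y ^ (2 * β)))
        (C * (E * (-θ * ((2 * β : ℕ) * x ^ (2 * β - 1))))) x :=
      (((hasDerivAt_pow (2 * β) x).const_mul (-θ)).exp).const_mul C
    have h2 : HasDerivAt (fun y : ℝ => -(2 * y) / (4 * (β : ℝ) * θ))
        (-2 / (4 * (β : ℝ) * θ)) x := by
      have : HasDerivAt (fun y : ℝ => -(2 * y)) (-2) x := by
        simpa using ((hasDerivAt_id x).const_mul (2:ℝ)).fun_neg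
      exact this.div_const _
    have hprod := h1.mul h2
    have hpow : (x : ℝ) ^ (2 * β - 1) * x = x ^ (2 * β) := by
      rw [← pow_succ]; congr 1; omega
    have hD : C * (E * (-θ * ((2 * β : ℕ) * x ^ (2 * β - 1)))) * (-(2 * x) / (4 * (β : ℝ) * θ))
        + C * E * (-2 / (4 * (β : ℝ) * θ))
        = C * E * (x ^ (2 * β) - 1 / (2 * (β : ℝ) * θ)) := by
      rw [← hpow]; push_cast; field_simp; ring
    unfold stein1
    have hfun : (fun y => gnDens β θ y * (fun y : ℝ => -(2 * y) / (4 * (β : ℝ) * θ)) y)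
        = fun y : ℝ => C * Real.exp (-θ * y ^ (2 * β)) * (-(2 * y) / (4 * (β : ℝ) * θ)) := by
      funext y; rw [hE]
    rw [hfun, (h1.fun_mul h2).deriv, hE x, ← hEx, hD]
    exact mul_div_cancel_left₀ _ (by positivity)
  -- general even moments
  have key : ∀ k : ℕ, Even k → (∫ x : ℝ, gnDens β θ x * x ^ k)
      = 2 * (C * (θ ^ (-((k:ℝ)+1) / (2*(β:ℝ))) * (1 / (2*(β:ℝ)))
          * Real.Gamma (((k:ℝ)+1) / (2*(β:ℝ))))) := by
    intro k hk
    have h1 : (∫ x : ℝ, gnDens β θ x * x ^ k)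
        = ∫ x : ℝ, (fun t : ℝ => C * Real.exp (-θ * t ^ (2 * β)) * t ^ k) |x| := by
      refine integral_congr_ae (Filter.Eventually.of_forall fun x => ?_)
      simp only [hE, (even_two_mul β).pow_abs, hk.pow_abs]
    rw [h1, integral_comp_abs (f := fun t : ℝ => C * Real.exp (-θ * t ^ (2 * β)) * t ^ k)]
    have h2 : (∫ t in Set.Ioi (0:ℝ), C * Real.exp (-θ * t ^ (2 * β)) * t ^ k)
        = C * ∫ t in Set.Ioi (0:ℝ), Real.exp (-θ * t ^ (2 * β)) * t ^ k := by
      rw [← integral_const_mul]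
      exact integral_congr_ae (Filter.Eventually.of_forall fun x => by ring)
    rw [h2, aux_halfline β hβ θ hθ k]
  -- integrability of even moments
  have hint : ∀ k : ℕ, Even k → Integrable (fun x : ℝ => gnDens β θ x * x ^ k) := by
    intro k hk
    refine (aux_integrable_comp_abs (aux_intOn β hβ θ hθ k C)).congr
      (Filter.Eventually.of_forall fun x => ?_)
    simp only [hE, (even_two_mul β).pow_abs, hk.pow_abs]
  -- second moment value
  have hM2 : (∫ x : ℝ, gnDens β θ x * x ^ 2)
      = θ ^ (-(1 : ℝ) / (β : ℝ)) * Γ₃ / Γ₁ := by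
    rw [key 2 even_two]
    have h3 : ((2:ℕ):ℝ) + 1 = 3 := by norm_num
    rw [h3, ← hΓ₃def]
    have hθpow : θ ^ (1 / (2*(β:ℝ))) * θ ^ (-(3:ℝ) / (2*(β:ℝ))) = θ ^ (-(1:ℝ)/(β:ℝ)) := by
      rw [← Real.rpow_add hθ]; congr 1; field_simp; ring
    rw [hC]
    rw [show 2 * ((β:ℝ) * θ ^ (1 / (2*(β:ℝ))) / Γ₁ * (θ ^ (-(3:ℝ) / (2*(β:ℝ)))
        * (1 / (2*(β:ℝ))) * Γ₃))
      = (θ ^ (1 / (2*(β:ℝ))) * θ ^ (-(3:ℝ) / (2*(β:ℝ)))) * Γ₃ / Γ₁ by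
        field_simp]
    rw [hθpow]
  -- normalization
  have hM0 : (∫ x : ℝ, gnDens β θ x) = 1 := by
    have h0 : (∫ x : ℝ, gnDens β θ x) = ∫ x : ℝ, gnDens β θ x * x ^ 0 := by simp
    rw [h0, key 0 Even.zero]
    have h1 : ((0:ℕ):ℝ) + 1 = 1 := by norm_num
    rw [h1, ← hΓ₁def]
    have hθpow : θ ^ (1 / (2*(β:ℝ))) * θ ^ (-(1:ℝ) / (2*(β:ℝ))) = 1 := by
      rw [← Real.rpow_add hθ, show 1 / (2*(β:ℝ)) + -(1:ℝ)/(2*(β:ℝ)) = 0 by ring,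
        Real.rpow_zero]
    rw [hC]
    field_simp
    rw [neg_div] at hθpow
    linear_combination hθpow
  refine ⟨fun x => ⟨(hstein x).trans (hlog x).symm, hlog x⟩, hM2, ?_⟩
  -- third integral
  have hsplit : (∫ x : ℝ, gnDens β θ x * (-x ^ 2 / (4 * (β : ℝ) * θ) + K))
      = (-(1 / (4 * (β : ℝ) * θ))) * (∫ x : ℝ, gnDens β θ x * x ^ 2)
        + K * ∫ x : ℝ, gnDens β θ x := by
    rw [← integral_const_mul, ← integral_const_mul,
      ← integral_add ((hint 2 even_two).const_mul _)]
    · exact integral_congr_ae (Filter.Eventually.of_forall fun x => by ring)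
    · exact ((hint 0 Even.zero).congr (Filter.Eventually.of_forall fun x => by
        simp)).const_mul K
  rw [hsplit, hM2, hM0, hK]
  have hθ1 : θ ^ ((1:ℝ) + 1 / (β:ℝ)) = θ * θ ^ ((1:ℝ)/(β:ℝ)) := by
    rw [Real.rpow_add hθ, Real.rpow_one]
  have hθ2 : θ ^ (-(1:ℝ) / (β:ℝ)) = (θ ^ ((1:ℝ)/(β:ℝ)))⁻¹ := by
    rw [neg_div, Real.rpow_neg hθ.le]
  have hup : 0 < θ ^ ((1:ℝ)/(β:ℝ)) := Real.rpow_pos_of_pos hθ _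
  rw [hθ1, hθ2]
  field_simp
  ring
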